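/- Let X be a metric space, μ a finite Borel measure, and (h_s) a continuous measure-preserving flow on X. Suppose that for every bounded uniformly continuous f: X → ℝ and every x ∈ X there exists a sequence R_n → ∞ with (1/R_n)∫₀^{R_n} f(h_s(x)) ds → ∫ f dμ / μ(X). Then every ergodic h_s-invariant Borel probability measure ν on X equals μ/μ(X). -/

import Mathlib

open MeasureTheory Filter Topology intervalIntegral

lemma bdd_integrable {X : Type*} [MeasurableSpace X] (ν : Measure X) [IsFiniteMeasure ν]
    {u : X → ℝ} (hm : AEStronglyMeasurable u ν) {C : ℝ} (hb : ∀ x, |u x| ≤ C) :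
    Integrable u ν :=
  (integrable_const C).mono' hm (Eventually.of_forall (by simpa [Real.norm_eq_abs] using hb))

lemma mp_integral_comp {X : Type*} [MeasurableSpace X] {ν : Measure X} {T : X → X}
    (hT : MeasurePreserving T ν ν) {g : X → ℝ} (hg : AEStronglyMeasurable g ν) :
    ∫ x, g (T x) ∂ν = ∫ x, g x ∂ν := by
  rw [← MeasureTheory.integral_map hT.aemeasurable (by rwa [hT.map_eq]), hT.map_eq]

/-- Garsia-type maximal ergodic inequality in the case where the maximal sets
exhaust the whole space. -/
lemma garsia_nonneg {X : Type*} [MeasurableSpace X] (ν : Measure X) [IsProbabilityMeasure ν]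
    (T : X → X) (hT : MeasurePreserving T ν ν) (G : X → ℝ) (hGm : Measurable G)
    {C : ℝ} (hGb : ∀ x, |G x| ≤ C)
    (hpos : ∀ x, ∃ n : ℕ, 0 < ∑ k ∈ Finset.range n, G (T^[k] x)) :
    0 ≤ ∫ x, G x ∂ν := by
  set S : ℕ → X → ℝ := fun n x => ∑ k ∈ Finset.range n, G (T^[k] x) with hS
  -- the running maxima
  let Φ : ℕ → X → ℝ := fun N => Nat.rec (fun _ => (0:ℝ)) (fun N ih x => max (ih x) (S (N+1) x)) N
  have hΦ0 : ∀ x, Φ 0 x = 0 := fun _ => rfl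
  have hΦsucc : ∀ N x, Φ (N+1) x = max (Φ N x) (S (N+1) x) := fun _ _ => rfl
  have hΦnonneg : ∀ N x, 0 ≤ Φ N x := by
    intro N
    induction N with
    | zero => intro x; simp [hΦ0]
    | succ N ih => intro x; rw [hΦsucc]; exact le_max_of_le_left (ih x)
  have hΦmono : ∀ N x, Φ N x ≤ Φ (N+1) x := by
    intro N x; rw [hΦsucc]; exact le_max_left _ _
  have hSle : ∀ N n, n ≤ N → ∀ x, S n x ≤ Φ N x := by
    intro N
    induction N with
    | zero => intro n hn x; interval_cases n; simp [hS, hΦ0]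
    | succ N ih =>
      intro n hn x
      rcases Nat.lt_or_ge n (N+1) with hlt | hge
      · exact (ih n (Nat.lt_succ_iff.mp hlt) x).trans (hΦmono N x)
      · have hn' : n = N + 1 := le_antisymm hn hge
        rw [hn', hΦsucc]; exact le_max_right _ _
  have hSm : ∀ n, Measurable (S n) := by
    intro n; apply Finset.measurable_sum
    intro k _; exact hGm.comp (hT.measurable.iterate k)
  have hΦm : ∀ N, Measurable (Φ N) := by
    intro N
    induction N with
    | zero => exact measurable_const
    | succ N ih => exact ih.max (hSm (N+1))
  -- cocycle identity
  have hScoc : ∀ n x, S (n+1) x = G x + S n (T x) := by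
    intro n x
    show (∑ k ∈ Finset.range (n+1), G (T^[k] x)) = G x + ∑ k ∈ Finset.range n, G (T^[k] (T x))
    rw [Finset.sum_range_succ']
    simp only [Function.iterate_zero, id_eq, Function.iterate_succ_apply]
    ring
  -- key pointwise inequality
  have hkey : ∀ N x, 0 < Φ N x → Φ N x ≤ G x + Φ N (T x) := by
    intro N
    induction N with
    | zero => intro x hx; rw [hΦ0] at hx; exact absurd hx (lt_irrefl 0)
    | succ N ih =>
      intro x hx
      have hSbound : S (N+1) x ≤ G x + Φ (N+1) (T x) := by
        rw [hScoc]
        exact add_le_add le_rfl ((hSle (N+1) N (Nat.le_succ N) (T x)))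
      rcases lt_or_ge 0 (Φ N x) with hpos' | hnp
      · rw [hΦsucc]
        exact max_le ((ih x hpos').trans (add_le_add le_rfl (hΦmono N (T x)))) hSbound
      · have hz : Φ N x = 0 := le_antisymm hnp (hΦnonneg N x)
        rw [hΦsucc, hz] at hx ⊢
        rcases max_cases (0:ℝ) (S (N+1) x) with ⟨he, _⟩ | ⟨he, _⟩
        · rw [he] at hx; exact absurd hx (lt_irrefl 0)
        · rw [he] at hx ⊢; exact hSbound
  -- integrability
  have hbΦ : ∀ N x, |Φ N x| ≤ (N:ℝ) * (max C 0) := by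
    intro N
    induction N with
    | zero => intro x; simp [hΦ0]
    | succ N ih =>
      intro x
      have hC0 : (0:ℝ) ≤ max C 0 := le_max_right _ _
      have hSb : |S (N+1) x| ≤ ((N:ℝ)+1) * max C 0 := by
        rw [hS]
        calc |∑ k ∈ Finset.range (N+1), G (T^[k] x)|
            ≤ ∑ k ∈ Finset.range (N+1), |G (T^[k] x)| := Finset.abs_sum_le_sum_abs _ _
          _ ≤ ∑ _k ∈ Finset.range (N+1), max C 0 :=
              Finset.sum_le_sum (fun k _ => (hGb _).trans (le_max_left _ _))
          _ = ((N:ℝ)+1) * max C 0 := by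
              rw [Finset.sum_const, Finset.card_range, nsmul_eq_mul]; push_cast; ring
      rw [hΦsucc, abs_le]
      have hΦabs := abs_le.mp (ih x)
      have hSabs := abs_le.mp hSb
      constructor
      · push_cast
        nlinarith [hΦnonneg N x, le_max_left (Φ N x) (S (N+1) x),
          mul_nonneg (by positivity : (0:ℝ) ≤ (N:ℝ)+1) hC0]
      · apply max_le
        · push_cast; nlinarith [hΦabs.2]
        · push_cast; exact hSabs.2
  have hintΦ : ∀ N, Integrable (Φ N) ν :=
    fun N => bdd_integrable ν (hΦm N).aestronglyMeasurable (hbΦ N)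
  have hintΦT : ∀ N, Integrable (fun x => Φ N (T x)) ν :=
    fun N => bdd_integrable ν ((hΦm N).comp hT.measurable).aestronglyMeasurable
      (fun x => hbΦ N (T x))
  have hintG : Integrable G ν := bdd_integrable ν hGm.aestronglyMeasurable hGb
  -- the maximal sets
  set E : ℕ → Set X := fun N => {x | 0 < Φ N x} with hE
  have hEmeas : ∀ N, MeasurableSet (E N) := fun N => measurableSet_lt measurable_const (hΦm N)
  have hΦmono' : ∀ x, Monotone fun N => Φ N x :=
    fun x => monotone_nat_of_le_succ (fun N => hΦmono N x)
  have hEmono : ∀ ⦃N M⦄, N ≤ M → E N ⊆ E M :=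
    fun N M hNM x hx => lt_of_lt_of_le hx (hΦmono' x hNM)
  have hEunion : ∀ x, ∃ N, x ∈ E N := by
    intro x
    obtain ⟨n, hn⟩ := hpos x
    exact ⟨n, lt_of_lt_of_le hn (hSle n n le_rfl x)⟩
  -- maximal inequality on each E N
  have hmax : ∀ N, 0 ≤ ∫ x in E N, G x ∂ν := by
    intro N
    have hintsub : Integrable (fun x => Φ N x - Φ N (T x)) ν := (hintΦ N).sub (hintΦT N)
    have hzero : ∫ x, (Φ N x - Φ N (T x)) ∂ν = 0 := by
      rw [integral_sub (hintΦ N) (hintΦT N),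
        mp_integral_comp hT (hΦm N).aestronglyMeasurable, sub_self]
    have hsplit := integral_add_compl (hEmeas N) hintsub
    have hcompl : ∫ x in (E N)ᶜ, (Φ N x - Φ N (T x)) ∂ν ≤ 0 := by
      apply setIntegral_nonpos (hEmeas N).compl
      intro x hx
      have hz : Φ N x = 0 :=
        le_antisymm (not_lt.mp (by simpa [hE] using hx)) (hΦnonneg N x)
      rw [hz]
      simpa using hΦnonneg N (T x)
    have hEpart : 0 ≤ ∫ x in E N, (Φ N x - Φ N (T x)) ∂ν := by
      rw [hzero] at hsplit
      linarith
    refine hEpart.trans (setIntegral_mono_on (hintsub.integrableOn) (hintG.integrableOn)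
      (hEmeas N) ?_)
    intro x hx
    have := hkey N x (by simpa [hE] using hx)
    linarith
  -- pass to the limit
  have htendsto : Tendsto (fun N => ∫ x in E N, G x ∂ν) atTop (𝓝 (∫ x, G x ∂ν)) := by
    have h1 : ∀ N, ∫ x in E N, G x ∂ν = ∫ x, (E N).indicator G x ∂ν :=
      fun N => (MeasureTheory.integral_indicator (hEmeas N)).symm
    simp_rw [h1]
    apply tendsto_integral_of_dominated_convergence (fun _ => max C 0)
    · exact fun N => (hGm.indicator (hEmeas N)).aestronglyMeasurable
    · exact integrable_const _
    · intro N
      refine Eventually.of_forall (fun x => ?_)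
      refine (norm_indicator_le_norm_self G x).trans ?_
      rw [Real.norm_eq_abs]; exact (hGb x).trans (le_max_left _ _)
    · refine Eventually.of_forall (fun x => ?_)
      obtain ⟨N₀, hN₀⟩ := hEunion x
      apply tendsto_atTop_of_eventually_const (i₀ := N₀)
      intro N hN
      exact Set.indicator_of_mem (hEmono hN hN₀) G
  exact ge_of_tendsto' htendsto hmax

set_option maxHeartbeats 1000000 in
/-- Unique ergodicity from equidistribution along subsequences of Birkhoff averages. -/
theorem stmt_15 {X : Type*} [MetricSpace X] [MeasurableSpace X] [BorelSpace X]
    (μ : Measure X) [IsFiniteMeasure μ] (hμpos : μ Set.univ ≠ 0)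
    (h : ℝ → X → X) (hcont : Continuous fun p : ℝ × X => h p.1 p.2)
    (hh0 : h 0 = id) (hhadd : ∀ s₁ s₂, h (s₁ + s₂) = h s₁ ∘ h s₂)
    (hmp : ∀ s, MeasurePreserving (h s) μ μ)
    (hequi : ∀ f : X → ℝ, UniformContinuous f → (∃ C, ∀ x, |f x| ≤ C) →
      ∀ x : X, ∃ R : ℕ → ℝ, Tendsto R atTop atTop ∧
        Tendsto (fun n => (1 / R n) * ∫ s in (0:ℝ)..(R n), f (h s x)) atTop
          (𝓝 ((∫ y, f y ∂μ) / (μ Set.univ).toReal))) :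
    ∀ ν : Measure X, IsProbabilityMeasure ν →
      (∀ s, MeasurePreserving (h s) ν ν) →
      (∀ A : Set X, MeasurableSet A → (∀ s, h s ⁻¹' A = A) → ν A = 0 ∨ ν A = 1) →
      ν = (μ Set.univ)⁻¹ • μ := by
  intro ν hνprob hνinv _herg
  -- basic continuity facts about the flow
  have hhs : ∀ s, Continuous (h s) := fun s =>
    hcont.comp (continuous_const.prodMk continuous_id)
  have horb : ∀ x : X, Continuous fun s => h s x := fun x =>
    hcont.comp (continuous_id.prodMk continuous_const)
  rcases isEmpty_or_nonempty X with hX | hX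
  · exfalso
    have h1 : ν Set.univ = 1 := hνprob.measure_univ
    rw [Set.univ_eq_empty_iff.mpr hX] at h1
    simp at h1
  -- Step 1: one-sided bound for all bounded uniformly continuous functions
  have hle : ∀ f : X → ℝ, UniformContinuous f → ∀ C : ℝ, (∀ x, |f x| ≤ C) →
      ∫ x, f x ∂ν ≤ (∫ y, f y ∂μ) / (μ Set.univ).toReal := by
    intro f hf C hC
    have hfc : Continuous f := hf.continuous
    have hC0 : 0 ≤ C := (abs_nonneg _).trans (hC (Classical.arbitrary X))
    set c : ℝ := (∫ y, f y ∂μ) / (μ Set.univ).toReal with hc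
    have hintf : Integrable f ν := bdd_integrable ν hfc.aestronglyMeasurable hC
    -- it suffices to prove `∫ f ∂ν ≤ c + ε` for all positive `ε`
    suffices hsuf : ∀ ε : ℝ, 0 < ε → ∫ x, f x ∂ν ≤ c + ε by
      by_contra hlt
      push_neg at hlt
      have hε : 0 < (∫ x, f x ∂ν - c) / 2 := by linarith
      have := hsuf _ hε
      linarith
    intro ε hε
    set g : X → ℝ := fun x => c + ε - f x with hgdef
    have hgc : Continuous g := continuous_const.sub hfc
    set Cg : ℝ := |c| + ε + C with hCg
    have hgb : ∀ x, |g x| ≤ Cg := by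
      intro x
      have h1 := abs_le.mp (hC x)
      have hgx : g x = c + ε - f x := rfl
      rw [hgx, hCg, abs_le]
      constructor <;> nlinarith [le_abs_self c, neg_abs_le c]
    have horbg : ∀ x : X, Continuous fun s => g (h s x) := fun x => hgc.comp (horb x)
    set T : X → X := h 1 with hT
    have hiter : ∀ n : ℕ, h (n : ℝ) = T^[n] := by
      intro n
      induction n with
      | zero => simpa using hh0
      | succ n ih =>
        have : ((n+1 : ℕ) : ℝ) = 1 + (n : ℝ) := by push_cast; ring
        rw [this, hhadd 1 (n : ℝ), ih, hT, Function.iterate_succ']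
    set G : X → ℝ := fun x => ∫ s in (0:ℝ)..1, g (h s x) with hGdef
    have hGcont : Continuous G := by
      apply intervalIntegral.continuous_of_dominated_interval (bound := fun _ => Cg)
      · exact fun x => (horbg x).aestronglyMeasurable
      · exact fun x => Eventually.of_forall fun t _ => by
          rw [Real.norm_eq_abs]; exact hgb _
      · exact intervalIntegrable_const
      · exact Eventually.of_forall fun t _ => hgc.comp (hhs t)
    have hGb : ∀ x, |G x| ≤ Cg := by
      intro x
      have := intervalIntegral.norm_integral_le_of_norm_le_const
        (C := Cg) (f := fun s => g (h s x)) (a := 0) (b := 1)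
        (fun s _ => by rw [Real.norm_eq_abs]; exact hgb _)
      rw [Real.norm_eq_abs] at this
      simpa using this
    -- Birkhoff sums of `G` are integrals of `g` along the flow
    have hSint : ∀ (n : ℕ) (x : X),
        ∑ k ∈ Finset.range n, G (T^[k] x) = ∫ s in (0:ℝ)..(n:ℝ), g (h s x) := by
      intro n x
      induction n with
      | zero => simp
      | succ n ih =>
        rw [Finset.sum_range_succ, ih]
        have hadj : (∫ s in (0:ℝ)..(n:ℝ), g (h s x)) + ∫ s in (n:ℝ)..((n:ℝ)+1), g (h s x)
            = ∫ s in (0:ℝ)..((n:ℝ)+1), g (h s x) :=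
          intervalIntegral.integral_add_adjacent_intervals
            ((horbg x).intervalIntegrable _ _) ((horbg x).intervalIntegrable _ _)
        have hGn : G (T^[n] x) = ∫ s in (n:ℝ)..((n:ℝ)+1), g (h s x) := by
          rw [hGdef]
          have h1 : ∀ s : ℝ, g (h s (T^[n] x)) = g (h (s + (n:ℝ)) x) := by
            intro s
            rw [← hiter n, ← Function.comp_apply (f := h s) (g := h (n:ℝ)), ← hhadd]
          simp only [h1]
          rw [intervalIntegral.integral_comp_add_right (f := fun s => g (h s x))]
          norm_num [add_comm]
        rw [hGn, hadj]
        push_cast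
        ring_nf
    -- every point has a Birkhoff sum which is positive
    have hclaim : ∀ x : X, ∃ n : ℕ, 0 < ∑ k ∈ Finset.range n, G (T^[k] x) := by
      intro x
      obtain ⟨R, hRtop, hRlim⟩ := hequi f hf ⟨C, hC⟩ x
      rw [← hc] at hRlim
      have h1 : ∀ᶠ k in atTop, (1 / R k) * ∫ s in (0:ℝ)..(R k), f (h s x) < c + ε/2 :=
        hRlim.eventually_lt_const (by linarith)
      have h2 : ∀ᶠ k in atTop, max 1 (2*(C + |c| + ε + 1)/ε) ≤ R k :=
        hRtop.eventually_ge_atTop _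
      obtain ⟨k, hk1, hk2⟩ := (h1.and h2).exists
      set r : ℝ := R k with hr
      have hr1 : 1 ≤ r := le_trans (le_max_left _ _) hk2
      have hr0 : 0 < r := lt_of_lt_of_le one_pos hr1
      have hrB : 2*(C + |c| + ε + 1)/ε ≤ r := le_trans (le_max_right _ _) hk2
      have hrε : 2*(C + |c| + ε + 1) ≤ r * ε := by
        rw [div_le_iff₀ hε] at hrB; linarith
      set n : ℕ := ⌈r⌉₊ with hn
      have hn2 : r ≤ (n : ℝ) := Nat.le_ceil r
      have hn1 : (n : ℝ) < r + 1 := Nat.ceil_lt_add_one hr0.le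
      refine ⟨n, ?_⟩
      rw [hSint n x]
      set A : ℝ := (1 / r) * ∫ s in (0:ℝ)..r, f (h s x) with hA
      have hrA : ∫ s in (0:ℝ)..r, f (h s x) = r * A := by
        rw [hA]; field_simp
      have hAlt : A < c + ε/2 := hk1
      set J : ℝ := ∫ s in r..(n:ℝ), f (h s x) with hJ
      have hJb : |J| ≤ C := by
        have := intervalIntegral.norm_integral_le_of_norm_le_const
          (C := C) (f := fun s => f (h s x)) (a := r) (b := (n:ℝ))
          (fun s _ => by rw [Real.norm_eq_abs]; exact hC _)
        rw [Real.norm_eq_abs] at this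
        refine this.trans ?_
        have : |(n:ℝ) - r| ≤ 1 := by rw [abs_le]; constructor <;> linarith
        nlinarith
      have hsplitf : ∫ s in (0:ℝ)..(n:ℝ), f (h s x)
          = (∫ s in (0:ℝ)..r, f (h s x)) + J :=
        (intervalIntegral.integral_add_adjacent_intervals
          (((hfc.comp (horb x))).intervalIntegrable _ _)
          (((hfc.comp (horb x))).intervalIntegrable _ _)).symm
      have hgint : ∫ s in (0:ℝ)..(n:ℝ), g (h s x)
          = (c + ε) * (n:ℝ) - ((∫ s in (0:ℝ)..r, f (h s x)) + J) := by
        have hgx : ∀ s : ℝ, g (h s x) = c + ε - f (h s x) := fun _ => rfl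
        simp only [hgx]
        rw [intervalIntegral.integral_sub intervalIntegrable_const
          ((show Continuous fun s : ℝ => f (h s x) from hfc.comp (horb x)).intervalIntegrable _ _)]
        rw [intervalIntegral.integral_const, ← hsplitf]
        simp [mul_comm]
      rw [hgint, hrA]
      have hJb' := abs_le.mp hJb
      set d : ℝ := (n:ℝ) - r with hd
      have hd0 : 0 ≤ d := by rw [hd]; linarith
      have hd1 : d ≤ 1 := by rw [hd]; linarith
      have hprod1 : 0 ≤ d * (c + |c| + 2*ε) :=
        mul_nonneg hd0 (by nlinarith [neg_abs_le c])
      have hprod2 : 0 ≤ (1 - d) * (|c| + ε) :=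
        mul_nonneg (by linarith) (by positivity)
      have h7 : -(|c| + ε) ≤ (c + ε) * d := by nlinarith
      have h4 : r * A ≤ r * (c + ε/2) := mul_le_mul_of_nonneg_left hAlt.le hr0.le
      have hcn : (c + ε) * (n:ℝ) = (c + ε) * r + (c + ε) * d := by rw [hd]; ring
      nlinarith
    -- the maximal ergodic inequality gives `0 ≤ ∫ G ∂ν`
    have hGnonneg : 0 ≤ ∫ x, G x ∂ν :=
      garsia_nonneg ν T (hνinv 1) G hGcont.measurable hGb hclaim
    -- Fubini: `∫ G ∂ν = ∫ g ∂ν`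
    haveI hfin : IsFiniteMeasure ((volume : Measure ℝ).restrict (Set.Ioc (0:ℝ) 1)) := by
      constructor
      rw [Measure.restrict_apply_univ]
      simp [Real.volume_Ioc]
    have huncont : Continuous (Function.uncurry fun (x : X) (s : ℝ) => g (h s x)) := by
      have : (Function.uncurry fun (x : X) (s : ℝ) => g (h s x))
          = (fun p : ℝ × X => g (h p.1 p.2)) ∘ (fun p : X × ℝ => (p.2, p.1)) := rfl
      rw [this]
      exact (hgc.comp hcont).comp (continuous_snd.prodMk continuous_fst)
    have hunint : Integrable (Function.uncurry fun (x : X) (s : ℝ) => g (h s x))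
        (ν.prod ((volume : Measure ℝ).restrict (Set.Ioc (0:ℝ) 1))) :=
      bdd_integrable _ huncont.aestronglyMeasurable
        (fun p => hgb (h p.2 p.1))
    have hswap := MeasureTheory.integral_integral_swap hunint
    have hGg : ∫ x, G x ∂ν = ∫ x, g x ∂ν := by
      have hG1 : ∀ x, G x = ∫ s, g (h s x)
          ∂((volume : Measure ℝ).restrict (Set.Ioc (0:ℝ) 1)) := by
        intro x
        show (∫ s in (0:ℝ)..1, g (h s x)) = _
        rw [intervalIntegral.integral_of_le zero_le_one]
      calc ∫ x, G x ∂ν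
          = ∫ x, (∫ s, g (h s x) ∂((volume : Measure ℝ).restrict (Set.Ioc (0:ℝ) 1))) ∂ν := by
            simp_rw [hG1]
        _ = ∫ s, (∫ x, g (h s x) ∂ν) ∂((volume : Measure ℝ).restrict (Set.Ioc (0:ℝ) 1)) :=
            hswap
        _ = ∫ s, (∫ x, g x ∂ν) ∂((volume : Measure ℝ).restrict (Set.Ioc (0:ℝ) 1)) := by
            congr 1
            funext s
            exact mp_integral_comp (hνinv s) hgc.aestronglyMeasurable
        _ = ∫ x, g x ∂ν := by
            rw [MeasureTheory.integral_const]
            rw [measureReal_def, Measure.restrict_apply_univ]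
            simp [Real.volume_Ioc]
    have hgν : ∫ x, g x ∂ν = c + ε - ∫ x, f x ∂ν := by
      rw [hgdef]
      rw [integral_sub (integrable_const _) hintf]
      simp
    rw [hGg, hgν] at hGnonneg
    linarith
  -- Step 2: equality of integrals for all bounded uniformly continuous functions
  have hkey : ∀ f : X → ℝ, UniformContinuous f → ∀ C : ℝ, (∀ x, |f x| ≤ C) →
      ∫ x, f x ∂ν = (∫ y, f y ∂μ) / (μ Set.univ).toReal := by
    intro f hf C hC
    refine le_antisymm (hle f hf C hC) ?_
    have hneg := hle (fun x => -f x) hf.neg C (fun x => by rw [abs_neg]; exact hC x)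
    simp only [MeasureTheory.integral_neg, neg_div] at hneg
    linarith
  -- Step 3: conclude the equality of measures
  set μ' : Measure X := (μ Set.univ)⁻¹ • μ with hμ'
  haveI hμ'prob : IsProbabilityMeasure μ' := by
    constructor
    rw [hμ', Measure.smul_apply, smul_eq_mul,
      ENNReal.inv_mul_cancel hμpos (measure_ne_top μ _)]
  have hint2 : ∀ f : X → ℝ, UniformContinuous f → ∀ C : ℝ, (∀ x, |f x| ≤ C) →
      ∫ x, f x ∂ν = ∫ x, f x ∂μ' := by
    intro f hf C hC
    rw [hkey f hf C hC, hμ', MeasureTheory.integral_smul_measure, ENNReal.toReal_inv, smul_eq_mul,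
      div_eq_mul_inv, mul_comm]
  -- equality on closed sets
  have hclosed : ∀ F : Set X, IsClosed F → ν F = μ' F := by
    intro F hF
    rcases F.eq_empty_or_nonempty with rfl | hFne
    · simp
    set gseq : ℕ → X → ℝ := fun n x => 1 - min 1 ((n+1) * Metric.infDist x F) with hgseq
    have hdc : Continuous fun x : X => Metric.infDist x F :=
      (Metric.lipschitz_infDist_pt F).continuous
    have hgcont : ∀ n, Continuous (gseq n) := fun n =>
      continuous_const.sub (continuous_const.min (continuous_const.mul hdc))
    have hduc : UniformContinuous fun x : X => Metric.infDist x F :=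
      (Metric.lipschitz_infDist_pt F).uniformContinuous
    have hguc : ∀ n, UniformContinuous (gseq n) := by
      intro n
      have u1 : UniformContinuous fun x : X => ((n:ℝ)+1) * Metric.infDist x F :=
        hduc.const_mul' _
      have u3 : UniformContinuous fun t : ℝ => min 1 t :=
        (LipschitzWith.id.const_min 1).uniformContinuous
      exact uniformContinuous_const.sub (u3.comp u1)
    have hgbd : ∀ n x, |gseq n x| ≤ 1 := by
      intro n x
      have h1 : 0 ≤ Metric.infDist x F := Metric.infDist_nonneg
      have h2 : min 1 ((n+1) * Metric.infDist x F) ≤ 1 := min_le_left _ _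
      have h3 : 0 ≤ min (1:ℝ) ((n+1) * Metric.infDist x F) :=
        le_min zero_le_one (by positivity)
      have hgx : gseq n x = 1 - min 1 ((n+1) * Metric.infDist x F) := rfl
      rw [hgx, abs_le]
      constructor <;> linarith
    have hglim : ∀ x, Tendsto (fun n => gseq n x) atTop
        (𝓝 (Set.indicator F (fun _ => (1:ℝ)) x)) := by
      intro x
      by_cases hx : x ∈ F
      · have h1 : Metric.infDist x F = 0 := Metric.infDist_zero_of_mem hx
        have h2 : ∀ n : ℕ, gseq n x = 1 := by
          intro n
          show (1:ℝ) - min 1 ((n+1) * Metric.infDist x F) = 1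
          rw [h1]
          norm_num
        rw [Set.indicator_of_mem hx]
        simp_rw [h2]
        exact tendsto_const_nhds
      · have hd : 0 < Metric.infDist x F := (hF.notMem_iff_infDist_pos hFne).mp hx
        rw [Set.indicator_of_notMem hx]
        apply tendsto_atTop_of_eventually_const (i₀ := ⌈1 / Metric.infDist x F⌉₊)
        intro n hn
        have h1 : 1 / Metric.infDist x F ≤ (n : ℝ) := le_trans (Nat.le_ceil _) (by
          exact_mod_cast hn)
        have h2 : (1:ℝ) ≤ (n+1) * Metric.infDist x F := by
          rw [div_le_iff₀ hd] at h1
          nlinarith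
        show (1:ℝ) - min 1 ((n+1) * Metric.infDist x F) = 0
        rw [min_eq_left h2]
        ring
    have hmeasF := hF.measurableSet
    have htend : ∀ (ρ : Measure X), IsProbabilityMeasure ρ →
        Tendsto (fun n => ∫ x, gseq n x ∂ρ) atTop (𝓝 ((ρ F).toReal)) := by
      intro ρ hρ
      have h0 : ∫ x, Set.indicator F (fun _ => (1:ℝ)) x ∂ρ = (ρ F).toReal := by
        rw [MeasureTheory.integral_indicator_const (1:ℝ) hmeasF, smul_eq_mul, mul_one, measureReal_def]
      rw [← h0]
      apply tendsto_integral_of_dominated_convergence (fun _ => (1:ℝ))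
      · exact fun n => (hgcont n).aestronglyMeasurable
      · exact integrable_const _
      · exact fun n => Eventually.of_forall fun x => by
          rw [Real.norm_eq_abs]; exact hgbd n x
      · exact Eventually.of_forall hglim
    have h1 := htend ν hνprob
    have h2 := htend μ' hμ'prob
    have h3 : ∀ n, ∫ x, gseq n x ∂ν = ∫ x, gseq n x ∂μ' :=
      fun n => hint2 _ (hguc n) 1 (hgbd n)
    simp_rw [h3] at h1
    have h4 : (ν F).toReal = (μ' F).toReal := tendsto_nhds_unique h1 h2
    exact (ENNReal.toReal_eq_toReal_iff' (measure_ne_top ν F) (measure_ne_top μ' F)).mp h4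
  refine MeasureTheory.ext_of_generate_finite {s : Set X | IsClosed s} ?_
    isPiSystem_isClosed (fun s hs => hclosed s hs) (hclosed _ isClosed_univ)
  rw [BorelSpace.measurable_eq (α := X), borel_eq_generateFrom_isClosed]
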